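/- For any bipartite density operator ρ_AB, the max-relative entropy of IQ coherence and the l1 IQ coherence satisfy 1 + C^{A|B}_{l1}(ρ_AB)/(d_A − 1) ≤ 2^{C^{A|B}_max(ρ_AB)} ≤ 1 + C^{A|B}_{l1}(ρ_AB). -/

import Mathlib

open scoped BigOperators ComplexOrder Kronecker

/-- Trace norm: `‖P‖_tr = Tr √(Pᴴ P)`. -/
noncomputable def traceNorm {n : Type*} [Fintype n] [DecidableEq n] (P : Matrix n n ℂ) : ℝ :=
  (((Matrix.posSemidef_conjTranspose_mul_self P).1.eigenvectorUnitary.1 *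
    Matrix.diagonal (((↑) : ℝ → ℂ) ∘ (√·) ∘ (Matrix.posSemidef_conjTranspose_mul_self P).1.eigenvalues) *
    (star (Matrix.posSemidef_conjTranspose_mul_self P).1.eigenvectorUnitary : Matrix n n ℂ)).trace).re

/-- The B-blocks of an operator on H_A ⊗ H_B. -/
def blockB {A B : Type*} (Q : Matrix (A × B) (A × B) ℂ) (i j : A) : Matrix B B ℂ :=
  fun b b' => Q (i, b) (j, b')

/-- l1 norm of IQ coherence: C^{A|B}_{l1}(ρ) = Σ_{i≠j} ‖ρ^B_{ij}‖_tr. -/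
noncomputable def CIQl1 {A B : Type*} [Fintype A] [Fintype B] [DecidableEq A] [DecidableEq B]
    (ρ : Matrix (A × B) (A × B) ℂ) : ℝ :=
  ∑ i, ∑ j, if i = j then 0 else traceNorm (blockB ρ i j)

/-- The set of incoherent-quantum (IQ) states: convex combinations
Σ_k p_k σ^A_k ⊗ τ^B_k with each σ^A_k an incoherent (diagonal) state on A and
each τ^B_k a state on B. -/
def IQstates (A B : Type*) [Fintype A] [Fintype B] [DecidableEq A] [DecidableEq B] :
    Set (Matrix (A × B) (A × B) ℂ) :=
  { σ | ∃ (k : ℕ) (w : Fin k → ℝ) (sA : Fin k → Matrix A A ℂ) (tB : Fin k → Matrix B B ℂ),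
      (∀ m, 0 ≤ w m) ∧ (∑ m, w m = 1) ∧
      (∀ m, (sA m).PosSemidef ∧ (sA m).trace = 1 ∧ ∀ i j, i ≠ j → sA m i j = 0) ∧
      (∀ m, (tB m).PosSemidef ∧ (tB m).trace = 1) ∧
      σ = ∑ m, (w m : ℂ) • (sA m ⊗ₖ tB m) }

/-- Max-relative entropy of IQ coherence:
C^{A|B}_max(ρ) = log₂ min {λ : ρ ≤ λσ for some σ ∈ IQ}. -/
noncomputable def CmaxIQ {A B : Type*} [Fintype A] [Fintype B] [DecidableEq A] [DecidableEq B]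
    (ρ : Matrix (A × B) (A × B) ℂ) : ℝ :=
  Real.logb 2 (sInf {l : ℝ | ∃ σ ∈ IQstates A B, ((l : ℂ) • σ - ρ).PosSemidef})

set_option linter.unusedSectionVars false
set_option maxHeartbeats 1000000

namespace CmaxAux
open Matrix
open scoped MatrixOrder


variable {n : Type*} [Fintype n] [DecidableEq n]

lemma sqrt_congr {M N : Matrix n n ℂ} (hM : M.IsHermitian) (hN : N.IsHermitian)
    (h : M = N) : hM.eigenvectorUnitary.1 *
      Matrix.diagonal (((↑) : ℝ → ℂ) ∘ (√·) ∘ hM.eigenvalues) *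
      (star hM.eigenvectorUnitary : Matrix n n ℂ) = hN.eigenvectorUnitary.1 *
      Matrix.diagonal (((↑) : ℝ → ℂ) ∘ (√·) ∘ hN.eigenvalues) *
      (star hN.eigenvectorUnitary : Matrix n n ℂ) := by subst h; rfl

lemma psd_diag_nonneg {M : Matrix n n ℂ} (hM : M.PosSemidef) (b : n) : 0 ≤ M b b := by
  have := hM.dotProduct_mulVec_nonneg (Pi.single b 1)
  simpa [dotProduct, mulVec, Pi.single_apply] using this

lemma psd_trace_re_nonneg {M : Matrix n n ℂ} (hM : M.PosSemidef) : 0 ≤ M.trace.re := by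
  rw [Matrix.trace, Complex.re_sum]
  exact Finset.sum_nonneg fun b _ => (Complex.nonneg_iff.mp (psd_diag_nonneg hM b)).1

lemma psd_trace_eq_re {M : Matrix n n ℂ} (hM : M.PosSemidef) :
    M.trace = (M.trace.re : ℂ) := by
  rw [Matrix.trace, Complex.re_sum, Complex.ofReal_sum]
  refine Finset.sum_congr rfl fun b _ => ?_
  have h := Complex.nonneg_iff.mp (psd_diag_nonneg hM b)
  exact Complex.ext rfl (by simp [← h.2])

lemma psd_trace_eq_zero_iff {M : Matrix n n ℂ} (hM : M.PosSemidef) (h : M.trace.re = 0) :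
    M = 0 := by
  obtain ⟨R, hR⟩ := CStarAlgebra.nonneg_iff_eq_star_mul_self.mp hM.nonneg
  rw [Matrix.star_eq_conjTranspose] at hR; subst hR
  have hR : R = 0 := by
    ext i j
    have htr : (Rᴴ * R).trace.re = ∑ j, ∑ i, Complex.normSq (R i j) := by
      rw [Matrix.trace, Complex.re_sum]
      refine Finset.sum_congr rfl fun j _ => ?_
      rw [Matrix.diag_apply, Matrix.mul_apply, Complex.re_sum]
      refine Finset.sum_congr rfl fun i _ => ?_
      simp [Matrix.conjTranspose_apply, Complex.normSq_apply]
    rw [htr] at h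
    have h0 : ∀ j ∈ Finset.univ, ∀ i ∈ Finset.univ, (0:ℝ) ≤ Complex.normSq (R i j) :=
      fun _ _ _ _ => Complex.normSq_nonneg _
    have := (Finset.sum_eq_zero_iff_of_nonneg
      (fun j _ => Finset.sum_nonneg (h0 j (Finset.mem_univ j)))).mp h j (Finset.mem_univ j)
    have := (Finset.sum_eq_zero_iff_of_nonneg (h0 j (Finset.mem_univ j))).mp this i
      (Finset.mem_univ i)
    simpa using Complex.normSq_eq_zero.mp this
  simp [hR]

lemma psd_smul_real {M : Matrix n n ℂ} (hM : M.PosSemidef) {c : ℝ} (hc : 0 ≤ c) :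
    ((c : ℂ) • M).PosSemidef := by
  constructor
  · have := hM.1
    unfold Matrix.IsHermitian at *
    rw [Matrix.conjTranspose_smul, this]
    simp [Complex.conj_ofReal]
  · exact (hM.smul (Complex.zero_le_real.mpr hc)).2

lemma posSemidef_sum {ι : Type*} (s : Finset ι) (f : ι → Matrix n n ℂ)
    (h : ∀ i ∈ s, (f i).PosSemidef) : (∑ i ∈ s, f i).PosSemidef := by
  classical
  induction s using Finset.induction with
  | empty => simpa using Matrix.PosSemidef.zero
  | @insert a s' hne ih =>
    rw [Finset.sum_insert hne]
    exact (h a (Finset.mem_insert_self a s')).add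
      (ih fun i hi => h i (Finset.mem_insert_of_mem hi))

lemma re_trace_mul_psd_nonneg {P Q : Matrix n n ℂ} (hP : P.PosSemidef) (hQ : Q.PosSemidef) :
    0 ≤ (P * Q).trace.re := by
  have hs : Q = CFC.sqrt Q * CFC.sqrt Q := (CFC.sqrt_mul_sqrt_self Q hQ.nonneg).symm
  have h1 : (P * Q).trace = (CFC.sqrt Q * P * CFC.sqrt Q).trace := by
    conv_lhs => rw [hs]
    rw [← Matrix.mul_assoc, Matrix.trace_mul_cycle]
  have h2 : (CFC.sqrt Q * P * CFC.sqrt Q).PosSemidef := by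
    have := hP.conjTranspose_mul_mul_same (CFC.sqrt Q)
    rwa [(CFC.sqrt_nonneg Q).posSemidef.1.eq] at this
  rw [h1]; exact psd_trace_re_nonneg h2



variable {A B : Type*} [Fintype A] [Fintype B] [DecidableEq A] [DecidableEq B]

/-- embedding of a B×B matrix as the (a,a') block. -/
def EK (a a' : A) (G : Matrix B B ℂ) : Matrix (A × B) (A × B) ℂ :=
  fun p q => if p.1 = a ∧ q.1 = a' then G p.2 q.2 else 0

lemma EK_mul (a b c d : A) (G H : Matrix B B ℂ) :
    EK a b G * EK c d H = if b = c then EK a d (G * H) else 0 := by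
  ext ⟨a₁, b₁⟩ ⟨a₂, b₂⟩
  have key : (EK a b G * EK c d H) (a₁, b₁) (a₂, b₂)
      = ∑ y : B, (if a₁ = a ∧ b = c ∧ a₂ = d then G b₁ y * H y b₂ else 0) := by
    rw [Matrix.mul_apply, Fintype.sum_prod_type]
    rw [Finset.sum_eq_single b]
    · apply Finset.sum_congr rfl
      intro y _
      simp only [EK]
      by_cases h1 : a₁ = a <;> by_cases h2 : b = c <;> by_cases h3 : a₂ = d <;>
        simp [h1, h2, h3]
    · intro x _ hx
      apply Finset.sum_eq_zero
      intro y _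
      simp [EK, hx]
    · intro h; exact absurd (Finset.mem_univ b) h
  rw [key]
  by_cases h2 : b = c
  · subst h2
    by_cases h1 : a₁ = a <;> by_cases h3 : a₂ = d <;>
      simp [EK, Matrix.mul_apply, h1, h3]
  · simp [h2]

lemma EK_conjTranspose (a b : A) (G : Matrix B B ℂ) : (EK a b G)ᴴ = EK b a Gᴴ := by
  ext ⟨a₁, b₁⟩ ⟨a₂, b₂⟩
  simp only [Matrix.conjTranspose_apply, EK]
  by_cases h : a₁ = b ∧ a₂ = a
  · simp [h, And.comm]
  · rw [if_neg h, if_neg (fun hc => h ⟨hc.2, hc.1⟩)]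
    simp

lemma EK_add (a b : A) (G H : Matrix B B ℂ) : EK a b (G + H) = EK a b G + EK a b H := by
  ext ⟨a₁, b₁⟩ ⟨a₂, b₂⟩
  simp only [EK, Matrix.add_apply]
  split_ifs <;> simp

lemma EK_smul (a b : A) (c : ℂ) (G : Matrix B B ℂ) : EK a b (c • G) = c • EK a b G := by
  ext ⟨a₁, b₁⟩ ⟨a₂, b₂⟩
  simp only [EK, Matrix.smul_apply, smul_eq_mul]
  split_ifs <;> simp

lemma EK_zero (a b : A) : EK a b (0 : Matrix B B ℂ) = 0 := by
  ext ⟨a₁, b₁⟩ ⟨a₂, b₂⟩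
  simp [EK]

lemma EK_trace (a : A) (G : Matrix B B ℂ) : (EK a a G).trace = G.trace := by
  rw [Matrix.trace, Matrix.trace]
  rw [Fintype.sum_prod_type]
  simp only [Matrix.diag_apply, EK]
  rw [Finset.sum_eq_single a]
  · simp
  · intro x _ hx; simp [hx]
  · intro h; exact absurd (Finset.mem_univ a) h

lemma trace_mul_EK (M : Matrix (A × B) (A × B) ℂ) (a b : A) (G : Matrix B B ℂ) :
    (M * EK a b G).trace = (blockB M b a * G).trace := by
  rw [Matrix.trace, Matrix.trace, Fintype.sum_prod_type]
  rw [Finset.sum_eq_single b]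
  · apply Finset.sum_congr rfl
    intro e _
    rw [Matrix.diag_apply, Matrix.mul_apply, Matrix.diag_apply, Matrix.mul_apply,
      Fintype.sum_prod_type]
    rw [Finset.sum_eq_single a]
    · apply Finset.sum_congr rfl
      intro e' _
      simp [EK, blockB]
    · intro x _ hx
      apply Finset.sum_eq_zero; intro y _; simp [EK, hx]
    · intro h; exact absurd (Finset.mem_univ a) h
  · intro x _ hx
    apply Finset.sum_eq_zero
    intro e _
    rw [Matrix.diag_apply, Matrix.mul_apply]
    apply Finset.sum_eq_zero
    intro p _
    simp [EK, hx]
  · intro h; exact absurd (Finset.mem_univ b) h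

lemma EK_posSemidef (a : A) {G : Matrix B B ℂ} (hG : G.PosSemidef) :
    (EK a a G).PosSemidef := by
  obtain ⟨R, hR⟩ := CStarAlgebra.nonneg_iff_eq_star_mul_self.mp hG.nonneg
  rw [Matrix.star_eq_conjTranspose] at hR; subst hR
  have : EK a a (Rᴴ * R) = (EK a a R)ᴴ * EK a a R := by
    rw [EK_conjTranspose, EK_mul, if_pos rfl]
  rw [this]
  exact Matrix.posSemidef_conjTranspose_mul_self _

lemma blockB_psd {M : Matrix (A × B) (A × B) ℂ} (hM : M.PosSemidef) (i : A) :
    (blockB M i i).PosSemidef := by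
  refine Matrix.PosSemidef.of_dotProduct_mulVec_nonneg ?_ ?_
  · ext b b'
    simpa [blockB, Matrix.conjTranspose_apply] using
      congrFun (congrFun hM.1.eq (i, b)) (i, b')
  · intro x
    have h := hM.dotProduct_mulVec_nonneg (fun p : A × B => if p.1 = i then x p.2 else 0)
    have key : star (fun p : A × B => if p.1 = i then x p.2 else 0) ⬝ᵥ
        M *ᵥ (fun p : A × B => if p.1 = i then x p.2 else 0)
        = star x ⬝ᵥ (blockB M i i) *ᵥ x := by
      simp only [dotProduct, mulVec, Fintype.sum_prod_type, Pi.star_apply]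
      rw [Finset.sum_eq_single i]
      · apply Finset.sum_congr rfl
        intro b _
        rw [if_pos rfl]
        congr 1
        rw [Finset.sum_eq_single i]
        · apply Finset.sum_congr rfl
          intro b' _
          simp [blockB]
        · intro a' _ ha'
          apply Finset.sum_eq_zero
          intro b' _
          simp [ha']
        · intro h'; exact absurd (Finset.mem_univ i) h'
      · intro a _ ha
        apply Finset.sum_eq_zero
        intro b _
        simp [ha]
      · intro h'; exact absurd (Finset.mem_univ i) h'
    rw [← key]; exact h

lemma blockB_conjTranspose {M : Matrix (A × B) (A × B) ℂ} (hM : M.IsHermitian) (i j : A) :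
    blockB M j i = (blockB M i j)ᴴ := by
  ext b b'
  simpa [blockB, Matrix.conjTranspose_apply] using
    (congrFun (congrFun hM.eq (j, b)) (i, b')).symm

lemma matrix_eq_sum_EK (M : Matrix (A × B) (A × B) ℂ) :
    M = ∑ i, ∑ j, EK i j (blockB M i j) := by
  ext ⟨a, b⟩ ⟨a', b'⟩
  rw [Matrix.sum_apply]
  rw [Finset.sum_eq_single a]
  · rw [Matrix.sum_apply, Finset.sum_eq_single a']
    · simp [EK, blockB]
    · intro x _ hx; simp [EK, Ne.symm hx]
    · intro h; exact absurd (Finset.mem_univ a') h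
  · intro x _ hx
    rw [Matrix.sum_apply]
    apply Finset.sum_eq_zero; intro y _; simp [EK, Ne.symm hx]
  · intro h; exact absurd (Finset.mem_univ a) h

lemma trace_eq_sum_blockB (M : Matrix (A × B) (A × B) ℂ) :
    M.trace = ∑ i, (blockB M i i).trace := by
  rw [Matrix.trace, Fintype.sum_prod_type]
  rfl

lemma blockB_sub (M N : Matrix (A × B) (A × B) ℂ) (i j : A) :
    blockB (M - N) i j = blockB M i j - blockB N i j := rfl

lemma blockB_smul (c : ℂ) (M : Matrix (A × B) (A × B) ℂ) (i j : A) :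
    blockB (c • M) i j = c • blockB M i j := rfl



variable {B : Type*} [Fintype B] [DecidableEq B]

/-- eigenvalues of `Xᴴ * X` -/
noncomputable def sd (X : Matrix B B ℂ) : B → ℝ :=
  (Matrix.posSemidef_conjTranspose_mul_self X).1.eigenvalues

/-- functional calculus on the eigenbasis of `Xᴴ * X` -/
noncomputable def Fm (X : Matrix B B ℂ) (f : B → ℝ) : Matrix B B ℂ :=
  ((Matrix.posSemidef_conjTranspose_mul_self X).1.eigenvectorUnitary : Matrix B B ℂ) *
    Matrix.diagonal (fun b => (f b : ℂ)) *
    (star ((Matrix.posSemidef_conjTranspose_mul_self X).1.eigenvectorUnitary : Matrix B B ℂ))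

variable (X : Matrix B B ℂ)

lemma sd_nonneg (b : B) : 0 ≤ sd X b :=
  (Matrix.posSemidef_conjTranspose_mul_self X).eigenvalues_nonneg b

lemma Fm_mul (f g : B → ℝ) : Fm X f * Fm X g = Fm X (fun b => f b * g b) := by
  unfold Fm
  set V := ((Matrix.posSemidef_conjTranspose_mul_self X).1.eigenvectorUnitary : Matrix B B ℂ)
  have hV : star V * V = 1 := by
    exact Matrix.UnitaryGroup.star_mul_self _
  calc V * Matrix.diagonal (fun b => (f b : ℂ)) * star V *
        (V * Matrix.diagonal (fun b => (g b : ℂ)) * star V)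
      = V * (Matrix.diagonal (fun b => (f b : ℂ)) * (star V * V) *
          Matrix.diagonal (fun b => (g b : ℂ))) * star V := by
        simp only [Matrix.mul_assoc]
    _ = V * Matrix.diagonal (fun b => ((f b * g b : ℝ) : ℂ)) * star V := by
        rw [hV, Matrix.mul_one, Matrix.diagonal_mul_diagonal]
        simp only [Matrix.mul_assoc]
        congr 2
        ext b
        push_cast
        ring

lemma Fm_conjTranspose (f : B → ℝ) : (Fm X f)ᴴ = Fm X f := by
  unfold Fm
  rw [Matrix.conjTranspose_mul, Matrix.conjTranspose_mul, Matrix.diagonal_conjTranspose]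
  have hstar : star (fun b => ((f b : ℝ) : ℂ)) = fun b => ((f b : ℝ) : ℂ) := by
    funext b
    simp [Pi.star_apply, Complex.conj_ofReal]
  simp only [Matrix.star_eq_conjTranspose, Matrix.conjTranspose_conjTranspose,
    Matrix.mul_assoc] at *
  rw [hstar]

lemma Fm_one : Fm X (fun _ => 1) = 1 := by
  unfold Fm
  have h1 : Matrix.diagonal (fun _ : B => ((1 : ℝ) : ℂ)) = 1 := by
    simp [Matrix.diagonal_one]
  rw [h1, Matrix.mul_one]
  exact ((Matrix.posSemidef_conjTranspose_mul_self X).1.eigenvectorUnitary).2.2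

lemma Fm_sub (f g : B → ℝ) : Fm X f - Fm X g = Fm X (fun b => f b - g b) := by
  have hfun : (fun b => ((f b - g b : ℝ) : ℂ))
      = fun b => ((f b : ℝ) : ℂ) - ((g b : ℝ) : ℂ) := by
    funext b
    push_cast
    ring

  unfold Fm
  rw [hfun, ← Matrix.diagonal_sub, ← Matrix.sub_mul, ← Matrix.mul_sub]

lemma Fm_trace (f : B → ℝ) : (Fm X f).trace = ((∑ b, f b : ℝ) : ℂ) := by
  unfold Fm
  rw [Matrix.trace_mul_cycle, Matrix.UnitaryGroup.star_mul_self, Matrix.one_mul,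
    Matrix.trace_diagonal]
  push_cast
  rfl

lemma Fm_posSemidef (f : B → ℝ) (hf : ∀ b, 0 ≤ f b) : (Fm X f).PosSemidef := by
  unfold Fm
  simp only [Matrix.star_eq_conjTranspose]
  apply Matrix.PosSemidef.mul_mul_conjTranspose_same
  apply Matrix.posSemidef_diagonal_iff.mpr
  intro b
  exact_mod_cast Complex.zero_le_real.mpr (hf b)

lemma conjTranspose_mul_self_eq_Fm : Xᴴ * X = Fm X (sd X) := by
  have h := (Matrix.posSemidef_conjTranspose_mul_self X).1.spectral_theorem
  rw [h]
  unfold Fm sd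
  rfl

lemma sqrt_eq_Fm :
    (Matrix.posSemidef_conjTranspose_mul_self X).1.eigenvectorUnitary.1 *
      Matrix.diagonal (((↑) : ℝ → ℂ) ∘ (√·) ∘ (Matrix.posSemidef_conjTranspose_mul_self X).1.eigenvalues) *
      (star (Matrix.posSemidef_conjTranspose_mul_self X).1.eigenvectorUnitary : Matrix B B ℂ)
      = Fm X (fun b => Real.sqrt (sd X b)) :=
  rfl

lemma mul_Fm_eq_zero (f : B → ℝ) (hf : ∀ b, sd X b ≠ 0 → f b = 0) : X * Fm X f = 0 := by
  rw [← Matrix.conjTranspose_mul_self_eq_zero]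
  rw [Matrix.conjTranspose_mul, Fm_conjTranspose]
  calc Fm X f * Xᴴ * (X * Fm X f) = Fm X f * (Xᴴ * X) * Fm X f := by
        simp only [Matrix.mul_assoc]
    _ = Fm X f * Fm X (sd X) * Fm X f := by rw [conjTranspose_mul_self_eq_Fm]
    _ = Fm X (fun b => f b * sd X b * f b) := by rw [Fm_mul, Fm_mul]
    _ = 0 := by
        have : (fun b => f b * sd X b * f b) = fun _ => (0 : ℝ) := by
          ext b
          by_cases h : sd X b = 0
          · rw [h]; ring
          · rw [hf b h]; ring
        rw [this]
        unfold Fm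
        simp

lemma mul_Fm_eq_self (f : B → ℝ) (hf : ∀ b, sd X b ≠ 0 → f b = 1) : X * Fm X f = X := by
  have h1 : X * Fm X (fun b => f b - 1) = 0 :=
    mul_Fm_eq_zero X _ (fun b hb => by rw [hf b hb]; ring)
  rw [← Fm_sub] at h1
  rw [Matrix.mul_sub, Fm_one, Matrix.mul_one, sub_eq_zero] at h1
  exact h1

lemma traceNorm_eq_sum_sqrt : traceNorm X = ∑ b, Real.sqrt (sd X b) := by
  unfold traceNorm
  rw [sqrt_eq_Fm, Fm_trace]
  simp

lemma traceNorm_nonneg : 0 ≤ traceNorm X := by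
  rw [traceNorm_eq_sum_sqrt]
  exact Finset.sum_nonneg fun b _ => Real.sqrt_nonneg _

lemma traceNorm_neg : traceNorm (-X) = traceNorm X := by
  unfold traceNorm
  rw [sqrt_congr (Matrix.posSemidef_conjTranspose_mul_self (-X)).1
    (Matrix.posSemidef_conjTranspose_mul_self X).1 (by simp)]

/-- pseudo-inverse of the square root of the eigenvalues -/
noncomputable def sfun (X : Matrix B B ℂ) : B → ℝ :=
  fun b => if sd X b = 0 then 0 else (Real.sqrt (sd X b))⁻¹

noncomputable def indf (X : Matrix B B ℂ) : B → ℝ :=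
  fun b => if sd X b = 0 then 0 else 1

lemma sfun_nonneg (b : B) : 0 ≤ sfun X b := by
  unfold sfun
  split_ifs
  · exact le_rfl
  · positivity

lemma sqrt_ne_zero_of_sd {b : B} (h : sd X b ≠ 0) : Real.sqrt (sd X b) ≠ 0 :=
  Real.sqrt_ne_zero'.mpr ((sd_nonneg X b).lt_of_ne (Ne.symm h))

lemma sds_eq_ind : (fun b => sfun X b * sd X b * sfun X b) = indf X := by
  ext b
  unfold sfun indf
  by_cases h : sd X b = 0
  · simp [h]
  · rw [if_neg h, if_neg h]
    have hs : Real.sqrt (sd X b) ≠ 0 := sqrt_ne_zero_of_sd X h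
    have hsq : Real.sqrt (sd X b) * Real.sqrt (sd X b) = sd X b :=
      Real.mul_self_sqrt (sd_nonneg X b)
    rw [← hsq]
    field_simp
    rw [Real.sqrt_sq (Real.sqrt_nonneg _)]

lemma sd_mul_sfun_eq_sqrt : (fun b => sd X b * sfun X b) = fun b => Real.sqrt (sd X b) := by
  ext b
  unfold sfun
  by_cases h : sd X b = 0
  · simp [h]
  · rw [if_neg h]
    have hs : Real.sqrt (sd X b) ≠ 0 := sqrt_ne_zero_of_sd X h
    have hsq : Real.sqrt (sd X b) * Real.sqrt (sd X b) = sd X b :=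
      Real.mul_self_sqrt (sd_nonneg X b)
    rw [← hsq]
    field_simp
    rw [Real.sqrt_sq (Real.sqrt_nonneg _)]

/-- `traceNorm Xᴴ = traceNorm X`. -/
lemma traceNorm_conjTranspose : traceNorm Xᴴ = traceNorm X := by
  have hS : (X * Fm X (sfun X) * Xᴴ).PosSemidef :=
    (Fm_posSemidef X _ (sfun_nonneg X)).mul_mul_conjTranspose_same X
  have hXXh : (X * Xᴴ).PosSemidef := Matrix.posSemidef_self_mul_conjTranspose X
  have hsq : (X * Fm X (sfun X) * Xᴴ) ^ 2 = X * Xᴴ := by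
    rw [pow_two]
    calc X * Fm X (sfun X) * Xᴴ * (X * Fm X (sfun X) * Xᴴ)
        = X * (Fm X (sfun X) * (Xᴴ * X) * Fm X (sfun X)) * Xᴴ := by
          simp only [Matrix.mul_assoc]
      _ = X * Fm X (fun b => sfun X b * sd X b * sfun X b) * Xᴴ := by
          rw [conjTranspose_mul_self_eq_Fm, Fm_mul, Fm_mul]
      _ = X * Xᴴ := by
          rw [sds_eq_ind]
          congr 1
          apply mul_Fm_eq_self
          intro b hb
          unfold indf
          rw [if_neg hb]
  have hT : (Fm Xᴴ (fun b => Real.sqrt (sd Xᴴ b))).PosSemidef :=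
    Fm_posSemidef _ _ (fun b => Real.sqrt_nonneg _)
  have hTsq : Fm Xᴴ (fun b => Real.sqrt (sd Xᴴ b)) * Fm Xᴴ (fun b => Real.sqrt (sd Xᴴ b))
      = X * Xᴴ := by
    have := conjTranspose_mul_self_eq_Fm Xᴴ
    rw [Matrix.conjTranspose_conjTranspose] at this
    rw [Fm_mul, this]
    congr 1
    funext b
    exact Real.mul_self_sqrt (sd_nonneg _ b)
  have hSeq : X * Fm X (sfun X) * Xᴴ = Fm Xᴴ (fun b => Real.sqrt (sd Xᴴ b)) := by
    rw [← (CFC.sqrt_eq_iff _ _ hXXh.nonneg hS.nonneg).mpr ((pow_two _).symm.trans hsq),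
      (CFC.sqrt_eq_iff _ _ hXXh.nonneg hT.nonneg).mpr hTsq]
  have hXh : traceNorm Xᴴ = ((X * Fm X (sfun X) * Xᴴ).trace).re := by
    rw [traceNorm_eq_sum_sqrt Xᴴ, hSeq, Fm_trace]
    simp
  have htr : (X * Fm X (sfun X) * Xᴴ).trace = ((∑ b, Real.sqrt (sd X b) : ℝ) : ℂ) := by
    rw [Matrix.trace_mul_cycle, conjTranspose_mul_self_eq_Fm, Fm_mul]
    rw [show (fun b => sd X b * sfun X b) = fun b => Real.sqrt (sd X b) from
      sd_mul_sfun_eq_sqrt X]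
    exact Fm_trace X _
  rw [hXh, htr, traceNorm_eq_sum_sqrt]
  simp


section YmZm

variable {B : Type*} [Fintype B] [DecidableEq B]

noncomputable def qfun (X : Matrix B B ℂ) : B → ℝ :=
  fun b => if sd X b = 0 then 0 else (Real.sqrt (Real.sqrt (sd X b)))⁻¹

noncomputable def rfun (X : Matrix B B ℂ) : B → ℝ :=
  fun b => Real.sqrt (Real.sqrt (sd X b))

noncomputable def Ym (X : Matrix B B ℂ) : Matrix B B ℂ := -(X * Fm X (qfun X))

noncomputable def Zm (X : Matrix B B ℂ) : Matrix B B ℂ := Fm X (rfun X)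

variable (X : Matrix B B ℂ)

lemma rfun_sq (b : B) : rfun X b * rfun X b = Real.sqrt (sd X b) := by
  unfold rfun
  exact Real.mul_self_sqrt (Real.sqrt_nonneg _)

lemma rfun_ne_zero {b : B} (h : sd X b ≠ 0) : rfun X b ≠ 0 := by
  unfold rfun
  have h1 : 0 < sd X b := (sd_nonneg X b).lt_of_ne (Ne.symm h)
  exact Real.sqrt_ne_zero'.mpr (Real.sqrt_pos.mpr h1)

lemma Ym_mul_Zm_conjT : Ym X * (Zm X)ᴴ = -X := by
  unfold Ym Zm
  rw [Fm_conjTranspose, Matrix.neg_mul, Matrix.mul_assoc, Fm_mul]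
  rw [mul_Fm_eq_self X _ ?hind]
  case hind =>
    intro b hb
    unfold qfun
    rw [if_neg hb]
    exact inv_mul_cancel₀ (rfun_ne_zero X hb)

lemma Zm_conjT : (Zm X)ᴴ = Zm X := Fm_conjTranspose X _

lemma Ym_trace : (Ym X * (Ym X)ᴴ).trace = ((traceNorm X : ℝ) : ℂ) := by
  unfold Ym
  rw [Matrix.conjTranspose_neg, Matrix.conjTranspose_mul, Fm_conjTranspose,
    neg_mul_neg]
  have h1 : X * Fm X (qfun X) * (Fm X (qfun X) * Xᴴ)
      = X * Fm X (fun b => qfun X b * qfun X b) * Xᴴ := by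
    rw [← Fm_mul]
    simp only [Matrix.mul_assoc]
  rw [h1, Matrix.trace_mul_cycle, conjTranspose_mul_self_eq_Fm, Fm_mul, Fm_trace]
  rw [traceNorm_eq_sum_sqrt]
  norm_cast
  refine Finset.sum_congr rfl fun b _ => ?_
  unfold qfun
  by_cases h : sd X b = 0
  · simp [h]
  · rw [if_neg h]
    have h2 : rfun X b * rfun X b = Real.sqrt (sd X b) := rfun_sq X b
    have h3 : rfun X b ≠ 0 := rfun_ne_zero X h
    have h4 : Real.sqrt (sd X b) ≠ 0 := sqrt_ne_zero_of_sd X h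
    unfold rfun at h2 h3
    rw [← h2]
    have hsd : Real.sqrt (sd X b) * Real.sqrt (sd X b) = sd X b :=
      Real.mul_self_sqrt (sd_nonneg X b)
    field_simp
    rw [Real.sqrt_sq (Real.sqrt_nonneg _)]
    linear_combination -hsd - (Real.sqrt (sd X b) +
      Real.sqrt (Real.sqrt (sd X b)) * Real.sqrt (Real.sqrt (sd X b))) * h2

lemma Zm_trace : (Zm X * (Zm X)ᴴ).trace = ((traceNorm X : ℝ) : ℂ) := by
  unfold Zm
  rw [Fm_conjTranspose, Fm_mul, Fm_trace, traceNorm_eq_sum_sqrt]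
  norm_cast
  exact Finset.sum_congr rfl fun b _ => rfun_sq X b

end YmZm

section LowerAux

variable {A B : Type*} [Fintype A] [Fintype B] [DecidableEq A] [DecidableEq B]

lemma IQ_trace_one {σ : Matrix (A × B) (A × B) ℂ} (hσ : σ ∈ IQstates A B) : σ.trace = 1 := by
  obtain ⟨k, w, sA, tB, hw0, hw1, hsA, htB, rfl⟩ := hσ
  rw [Matrix.trace_sum]
  have : ∀ m, ((w m : ℂ) • (sA m ⊗ₖ tB m)).trace = (w m : ℂ) := by
    intro m
    rw [Matrix.trace_smul, Matrix.trace_kronecker, (hsA m).2.1, (htB m).2, one_mul]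
    simp
  rw [Finset.sum_congr rfl (fun m _ => this m)]
  rw [← Complex.ofReal_sum, hw1, Complex.ofReal_one]

lemma IQ_offdiag {σ : Matrix (A × B) (A × B) ℂ} (hσ : σ ∈ IQstates A B) {i j : A}
    (hij : i ≠ j) : blockB σ i j = 0 := by
  obtain ⟨k, w, sA, tB, hw0, hw1, hsA, htB, rfl⟩ := hσ
  ext b b'
  show (∑ m, (w m : ℂ) • (sA m ⊗ₖ tB m)) (i, b) (j, b') = 0
  rw [Matrix.sum_apply]
  apply Finset.sum_eq_zero
  intro m _
  rw [Matrix.smul_apply, Matrix.kroneckerMap_apply, (hsA m).2.2 i j hij]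
  simp

lemma block_traceNorm_le {M : Matrix (A × B) (A × B) ℂ} (hM : M.PosSemidef) (i j : A) :
    2 * traceNorm (blockB M i j)
      ≤ (blockB M i i).trace.re + (blockB M j j).trace.re := by
  set X := blockB M i j with hXdef
  set C : Matrix B B ℂ := Fm Xᴴ (sfun Xᴴ) * X with hC
  set W : Matrix (A × B) (A × B) ℂ := EK i i C - EK j i 1 with hW
  have hXX : X * Xᴴ = Fm Xᴴ (sd Xᴴ) := by
    have h := conjTranspose_mul_self_eq_Fm Xᴴ
    rwa [Matrix.conjTranspose_conjTranspose] at h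
  have hCh : Cᴴ = Xᴴ * Fm Xᴴ (sfun Xᴴ) := by
    rw [hC, Matrix.conjTranspose_mul, Fm_conjTranspose]
  have hCC : C * Cᴴ = Fm Xᴴ (indf Xᴴ) := by
    rw [hC, hCh]
    calc Fm Xᴴ (sfun Xᴴ) * X * (Xᴴ * Fm Xᴴ (sfun Xᴴ))
        = Fm Xᴴ (sfun Xᴴ) * (X * Xᴴ) * Fm Xᴴ (sfun Xᴴ) := by simp only [Matrix.mul_assoc]
      _ = Fm Xᴴ (sfun Xᴴ) * Fm Xᴴ (sd Xᴴ) * Fm Xᴴ (sfun Xᴴ) := by rw [hXX]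
      _ = Fm Xᴴ (fun b => sfun Xᴴ b * sd Xᴴ b * sfun Xᴴ b) := by rw [Fm_mul, Fm_mul]
      _ = Fm Xᴴ (indf Xᴴ) := by rw [sds_eq_ind]
  have hcross1 : (Xᴴ * C).trace = ((traceNorm X : ℝ) : ℂ) := by
    rw [hC, ← Matrix.mul_assoc, Matrix.trace_mul_cycle, hXX, Fm_mul, Fm_trace]
    rw [show (fun b => sd Xᴴ b * sfun Xᴴ b) = fun b => Real.sqrt (sd Xᴴ b) from
      sd_mul_sfun_eq_sqrt Xᴴ]
    rw [← traceNorm_eq_sum_sqrt, traceNorm_conjTranspose]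
  have hcross2 : (X * Cᴴ).trace = ((traceNorm X : ℝ) : ℂ) := by
    rw [hCh, ← Matrix.mul_assoc, hXX, Fm_mul, Fm_trace]
    rw [show (fun b => sd Xᴴ b * sfun Xᴴ b) = fun b => Real.sqrt (sd Xᴴ b) from
      sd_mul_sfun_eq_sqrt Xᴴ]
    rw [← traceNorm_eq_sum_sqrt, traceNorm_conjTranspose]
  have hPii := blockB_psd hM i
  have hQjj := blockB_psd hM j
  have hji : blockB M j i = Xᴴ := blockB_conjTranspose hM.1 i j
  -- W * Wᴴ expansion
  have hWW : W * Wᴴ = EK i i (C * Cᴴ) - EK i j C - EK j i Cᴴ + EK j j 1 := by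
    rw [hW, Matrix.conjTranspose_sub, EK_conjTranspose, EK_conjTranspose,
      Matrix.conjTranspose_one]
    rw [Matrix.sub_mul, Matrix.mul_sub, Matrix.mul_sub]
    rw [EK_mul, EK_mul, EK_mul, EK_mul]
    rw [if_pos rfl, if_pos rfl, if_pos rfl, if_pos rfl]
    simp only [Matrix.one_mul, Matrix.mul_one]
    abel
  -- main positivity
  have hpos : 0 ≤ (M * (W * Wᴴ)).trace.re := by
    have h1 : (Wᴴ * M * W).trace = (M * (W * Wᴴ)).trace := by
      rw [Matrix.trace_mul_cycle, ← Matrix.mul_assoc]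
      rw [Matrix.trace_mul_comm]
      rw [Matrix.mul_assoc]
    rw [← h1]
    exact psd_trace_re_nonneg (hM.conjTranspose_mul_mul_same W)
  have hexp : (M * (W * Wᴴ)).trace
      = (blockB M i i * (C * Cᴴ)).trace - ((traceNorm X : ℝ) : ℂ) - ((traceNorm X : ℝ) : ℂ)
        + (blockB M j j).trace := by
    rw [hWW]
    rw [Matrix.mul_add, Matrix.mul_sub, Matrix.mul_sub]
    rw [Matrix.trace_add, Matrix.trace_sub, Matrix.trace_sub]
    rw [trace_mul_EK, trace_mul_EK, trace_mul_EK, trace_mul_EK]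
    rw [hji, Matrix.mul_one]
    rw [hcross1, ← hXdef, hcross2]
  -- the contraction bound
  have hcontr : (blockB M i i * (C * Cᴴ)).trace.re ≤ (blockB M i i).trace.re := by
    have hcompl : (1 - Fm Xᴴ (indf Xᴴ)).PosSemidef := by
      rw [← Fm_one Xᴴ, Fm_sub]
      apply Fm_posSemidef
      intro b
      unfold indf
      split_ifs <;> norm_num
    have h := re_trace_mul_psd_nonneg hPii hcompl
    rw [Matrix.mul_sub, Matrix.mul_one, Matrix.trace_sub] at h
    rw [Complex.sub_re] at h
    rw [hCC]
    linarith
  have hre : 0 ≤ (blockB M i i * (C * Cᴴ)).trace.re - 2 * traceNorm X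
      + (blockB M j j).trace.re := by
    have := hpos
    rw [hexp] at this
    simp only [Complex.add_re, Complex.sub_re, Complex.ofReal_re] at this
    linarith
  linarith

end LowerAux

section SumAux

lemma offdiag_split {γ : Type*} [AddCommMonoid γ] {A : Type*} [Fintype A] [DecidableEq A]
    (r : A → A → Prop) [DecidableRel r]
    (htri : ∀ i j : A, i ≠ j → (r i j ↔ ¬ r j i)) (hirr : ∀ i : A, ¬ r i i)
    (f : A → A → γ) :
    ∑ i, ∑ j, (if i = j then 0 else f i j)
      = ∑ i, ∑ j, (if r i j then f i j + f j i else 0) := by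
  have hpt : ∀ i j : A, (if i = j then (0:γ) else f i j)
      = (if r i j then f i j else 0) + (if r j i then f i j else 0) := by
    intro i j
    by_cases hij : i = j
    · subst hij
      simp [hirr i]
    · rw [if_neg hij]
      by_cases hr : r i j
      · rw [if_pos hr, if_neg (((htri i j hij).mp hr)), add_zero]
      · have : r j i := by
          by_contra hc
          exact hr ((htri i j hij).mpr hc)
        rw [if_neg hr, if_pos this, zero_add]
  calc ∑ i, ∑ j, (if i = j then (0:γ) else f i j)
      = ∑ i, ∑ j, ((if r i j then f i j else 0) + (if r j i then f i j else 0)) := by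
        exact Finset.sum_congr rfl fun i _ => Finset.sum_congr rfl fun j _ => hpt i j
    _ = (∑ i, ∑ j, (if r i j then f i j else 0))
        + ∑ i, ∑ j, (if r j i then f i j else 0) := by
        rw [← Finset.sum_add_distrib]
        exact Finset.sum_congr rfl fun i _ => Finset.sum_add_distrib
    _ = (∑ i, ∑ j, (if r i j then f i j else 0))
        + ∑ i, ∑ j, (if r i j then f j i else 0) := by
        congr 1
        rw [Finset.sum_comm]
    _ = ∑ i, ∑ j, (if r i j then f i j + f j i else 0) := by
        rw [← Finset.sum_add_distrib]
        refine Finset.sum_congr rfl fun i _ => ?_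
        rw [← Finset.sum_add_distrib]
        refine Finset.sum_congr rfl fun j _ => ?_
        by_cases hr : r i j <;> simp [hr]

end SumAux

section LowerMain

variable {A B : Type*} [Fintype A] [Fintype B] [DecidableEq A] [DecidableEq B]

lemma lower_bound (hd : 2 ≤ Fintype.card A) (ρ : Matrix (A × B) (A × B) ℂ)
    (hTr : ρ.trace = 1) {l : ℝ} {σ : Matrix (A × B) (A × B) ℂ}
    (hσ : σ ∈ IQstates A B) (hpsd : ((l : ℂ) • σ - ρ).PosSemidef) :
    1 + CIQl1 ρ / ((Fintype.card A : ℝ) - 1) ≤ l := by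
  set M : Matrix (A × B) (A × B) ℂ := (l : ℂ) • σ - ρ with hM
  set t : A → ℝ := fun i => (blockB M i i).trace.re with ht
  have htot : ∑ i, t i = l - 1 := by
    have h1 : M.trace = ((l : ℝ) : ℂ) - 1 := by
      rw [hM, Matrix.trace_sub, Matrix.trace_smul, IQ_trace_one hσ, hTr]
      simp
    have h2 : M.trace = ∑ i, (blockB M i i).trace := trace_eq_sum_blockB M
    have : (∑ i, (blockB M i i).trace).re = ((l : ℝ) : ℂ).re - (1 : ℂ).re := by
      rw [← h2, h1, Complex.sub_re]
    rw [Complex.re_sum] at this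
    simpa using this
  have hblocks : ∀ i j : A, i ≠ j → traceNorm (blockB ρ i j) = traceNorm (blockB M i j) := by
    intro i j hij
    have : blockB M i j = -(blockB ρ i j) := by
      rw [hM, blockB_sub, blockB_smul, IQ_offdiag hσ hij]
      simp
    rw [this, traceNorm_neg]
  have hkey : CIQl1 ρ ≤ ((Fintype.card A : ℝ) - 1) * (l - 1) := by
    have hle : CIQl1 ρ ≤ ∑ i, ∑ j, (if i = j then (0:ℝ) else (t i + t j) / 2) := by
      unfold CIQl1
      refine Finset.sum_le_sum fun i _ => Finset.sum_le_sum fun j _ => ?_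
      by_cases hij : i = j
      · simp [hij]
      · rw [if_neg hij, if_neg hij, hblocks i j hij]
        have h2 := block_traceNorm_le hpsd i j
        simp only [ht]
        linarith [h2]
    have hsum : ∑ i, ∑ j, (if i = j then (0:ℝ) else (t i + t j) / 2)
        = ((Fintype.card A : ℝ) - 1) * ∑ i, t i := by
      have hrow : ∀ i : A, ∑ j, (if i = j then (0:ℝ) else t i + t j)
          = (Fintype.card A : ℝ) * t i + (∑ j, t j) - 2 * t i := by
        intro i
        have e1 : ∀ j : A, (if i = j then (0:ℝ) else t i + t j)
            = (t i + t j) - (if i = j then t i + t j else 0) := by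
          intro j
          by_cases hij : i = j <;> simp [hij]
        rw [Finset.sum_congr rfl fun j _ => e1 j, Finset.sum_sub_distrib,
          Finset.sum_add_distrib, Finset.sum_const, Finset.sum_ite_eq]
        simp [Finset.card_univ]
        ring
      have : ∑ i, ∑ j, (if i = j then (0:ℝ) else t i + t j)
          = (2 * (Fintype.card A : ℝ) - 2) * ∑ i, t i := by
        rw [Finset.sum_congr rfl fun i _ => hrow i]
        rw [Finset.sum_sub_distrib, Finset.sum_add_distrib, ← Finset.mul_sum,
          Finset.sum_const, Finset.card_univ, ← Finset.mul_sum]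
        simp only [nsmul_eq_mul]
        ring
      have hhalf : ∑ i, ∑ j, (if i = j then (0:ℝ) else (t i + t j) / 2)
          = (∑ i, ∑ j, (if i = j then (0:ℝ) else t i + t j)) / 2 := by
        rw [Finset.sum_div]
        refine Finset.sum_congr rfl fun i _ => ?_
        rw [Finset.sum_div]
        refine Finset.sum_congr rfl fun j _ => ?_
        by_cases hij : i = j <;> simp [hij]
      rw [hhalf, this]
      ring
    rw [hsum, htot] at hle
    exact hle
  have hcard : (0:ℝ) < (Fintype.card A : ℝ) - 1 := by
    have : (2:ℝ) ≤ (Fintype.card A : ℝ) := by exact_mod_cast hd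
    linarith
  have : CIQl1 ρ / ((Fintype.card A : ℝ) - 1) ≤ l - 1 := by
    rw [div_le_iff₀ hcard]
    linarith [hkey]
  linarith

end LowerMain

section UpperAux

variable {A B : Type*} [Fintype A] [Fintype B] [DecidableEq A] [DecidableEq B]

lemma EK_neg (a b : A) (G : Matrix B B ℂ) : EK a b (-G) = -(EK a b G : Matrix (A × B) (A × B) ℂ) := by
  ext ⟨a₁, b₁⟩ ⟨a₂, b₂⟩
  simp only [EK, Matrix.neg_apply]
  split_ifs <;> simp

lemma EK_sum {ι : Type*} (s : Finset ι) (a b : A) (g : ι → Matrix B B ℂ) :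
    EK a b (∑ m ∈ s, g m) = ∑ m ∈ s, EK a b (g m) := by
  ext ⟨a₁, b₁⟩ ⟨a₂, b₂⟩
  rw [Matrix.sum_apply]
  simp only [EK, Matrix.sum_apply]
  split_ifs with h
  · rfl
  · exact (Finset.sum_eq_zero fun m _ => rfl).symm

lemma kron_single_EK (i : A) (G : Matrix B B ℂ) :
    Matrix.diagonal (Pi.single i (1 : ℂ)) ⊗ₖ G = EK i i G := by
  ext ⟨a₁, b₁⟩ ⟨a₂, b₂⟩
  rw [Matrix.kroneckerMap_apply]
  simp only [EK, Matrix.diagonal_apply, Pi.single_apply]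
  by_cases h1 : a₁ = a₂
  · subst h1
    by_cases h2 : a₁ = i <;> simp [h2]
  · rw [if_neg h1]
    have : ¬(a₁ = i ∧ a₂ = i) := fun hc => h1 (hc.1.trans hc.2.symm)
    rw [if_neg this, zero_mul]

lemma CIQl1_nonneg (ρ : Matrix (A × B) (A × B) ℂ) : 0 ≤ CIQl1 ρ := by
  unfold CIQl1
  refine Finset.sum_nonneg fun i _ => Finset.sum_nonneg fun j _ => ?_
  split_ifs
  · exact le_rfl
  · exact traceNorm_nonneg _

lemma sum_offdiag_eq (g : A → Matrix (A × B) (A × B) ℂ) :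
    ∀ i : A, ∑ j, (if i = j then (0 : Matrix (A × B) (A × B) ℂ) else g j)
      = (∑ j, g j) - g i := by
  intro i
  have : ∀ j : A, (if i = j then (0 : Matrix (A × B) (A × B) ℂ) else g j)
      = g j - (if i = j then g j else 0) := by
    intro j
    by_cases h : i = j <;> simp [h]
  rw [Finset.sum_congr rfl fun j _ => this j, Finset.sum_sub_distrib, Finset.sum_ite_eq]
  simp

/-- any PSD block-diagonal matrix with positive trace, normalized, is an IQ state -/
lemma blockdiag_IQ [Nonempty B] (Nblk : A → Matrix B B ℂ)
    (hpsd : ∀ i, (Nblk i).PosSemidef) {c : ℝ} (hc : 0 < c)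
    (hctr : ∑ i, (Nblk i).trace.re = c) :
    ((c⁻¹ : ℝ) : ℂ) • (∑ i, EK i i (Nblk i)) ∈ IQstates A B := by
  classical
  set b₀ : B := Classical.arbitrary B
  set eA : Fin (Fintype.card A) ≃ A := (Fintype.equivFin A).symm with heA
  refine ⟨Fintype.card A,
    fun m => (Nblk (eA m)).trace.re / c,
    fun m => Matrix.diagonal (Pi.single (eA m) (1 : ℂ)),
    fun m => if (Nblk (eA m)).trace.re = 0 then Matrix.diagonal (Pi.single b₀ (1 : ℂ))
      else (((Nblk (eA m)).trace.re)⁻¹ : ℂ) • Nblk (eA m),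
    ?_, ?_, ?_, ?_, ?_⟩
  · intro m
    exact div_nonneg (psd_trace_re_nonneg (hpsd _)) hc.le
  · rw [← Finset.sum_div]
    rw [Equiv.sum_comp eA (fun i => (Nblk i).trace.re)]
    rw [hctr]
    exact div_self hc.ne'
  · intro m
    refine ⟨Matrix.PosSemidef.diagonal ?_, ?_, ?_⟩
    · intro j
      rcases Pi.single_apply (eA m) (1:ℂ) j with h
      rw [h]
      split_ifs
      · exact zero_le_one
      · exact le_rfl
    · rw [Matrix.trace_diagonal]
      simp [Finset.sum_pi_single']
    · intro i j hij
      exact Matrix.diagonal_apply_ne _ hij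
  · intro m
    dsimp only
    by_cases h : (Nblk (eA m)).trace.re = 0
    · rw [if_pos h]
      refine ⟨Matrix.PosSemidef.diagonal ?_, ?_⟩
      · intro j
        rcases Pi.single_apply b₀ (1:ℂ) j with hh
        rw [hh]
        split_ifs
        · exact zero_le_one
        · exact le_rfl
      · rw [Matrix.trace_diagonal]
        simp [Finset.sum_pi_single']
    · rw [if_neg h]
      constructor
      · rw [← Complex.ofReal_inv]
        exact psd_smul_real (hpsd _) (inv_nonneg.mpr (psd_trace_re_nonneg (hpsd _)))
      · rw [Matrix.trace_smul, smul_eq_mul]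
        nth_rewrite 2 [psd_trace_eq_re (hpsd (eA m))]
        exact inv_mul_cancel₀ (Complex.ofReal_ne_zero.mpr h)
  · -- the matrix identity
    have hterm : ∀ m : Fin (Fintype.card A),
        (((Nblk (eA m)).trace.re / c : ℝ) : ℂ) •
          (Matrix.diagonal (Pi.single (eA m) (1 : ℂ)) ⊗ₖ
            (if (Nblk (eA m)).trace.re = 0 then Matrix.diagonal (Pi.single b₀ (1 : ℂ))
              else (((Nblk (eA m)).trace.re)⁻¹ : ℂ) • Nblk (eA m)))
        = EK (eA m) (eA m) (((c⁻¹ : ℝ) : ℂ) • Nblk (eA m)) := by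
      intro m
      rw [kron_single_EK]
      by_cases h : (Nblk (eA m)).trace.re = 0
      · have hz : Nblk (eA m) = 0 := psd_trace_eq_zero_iff (hpsd _) h
        rw [if_pos h, hz]
        simp [EK_zero]
      · rw [if_neg h, ← EK_smul]
        congr 1
        rw [smul_smul, ← Complex.ofReal_inv, ← Complex.ofReal_mul]
        congr 1
        field_simp [h]
    rw [Finset.sum_congr rfl fun m _ => hterm m]
    rw [Equiv.sum_comp eA (fun i => EK i i (((c⁻¹ : ℝ) : ℂ) • Nblk i))]
    rw [Finset.smul_sum]
    exact Finset.sum_congr rfl fun i _ => (EK_smul i i _ _).symm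

end UpperAux

section UpperMain

variable {A B : Type*} [Fintype A] [Fintype B] [DecidableEq A] [DecidableEq B]

lemma upper_bound [Nonempty B] (ρ : Matrix (A × B) (A × B) ℂ) (hρ : ρ.PosSemidef)
    (hTr : ρ.trace = 1) :
    ∃ σ ∈ IQstates A B, (((1 + CIQl1 ρ : ℝ) : ℂ) • σ - ρ).PosSemidef := by
  classical
  have hlam : 0 < 1 + CIQl1 ρ := by linarith [CIQl1_nonneg ρ]
  set eF := Fintype.equivFin A with heF
  have htri : ∀ i j : A, i ≠ j → ((eF i < eF j) ↔ ¬ (eF j < eF i)) := by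
    intro i j hij
    have hne : eF i ≠ eF j := fun hc => hij (eF.injective hc)
    constructor
    · exact fun h => lt_asymm h
    · intro h
      exact hne.lt_or_gt.resolve_right h
  have hirr : ∀ i : A, ¬ (eF i < eF i) := fun i => lt_irrefl _
  have hrne : ∀ {i j : A}, eF i < eF j → i ≠ j := by
    intro i j h hc
    subst hc
    exact hirr i h
  -- abbreviations
  set YY : A → A → Matrix B B ℂ :=
    fun i j => Ym (blockB ρ i j) * (Ym (blockB ρ i j))ᴴ with hYY
  set ZZ : A → A → Matrix B B ℂ :=
    fun i j => Zm (blockB ρ i j) * (Zm (blockB ρ i j))ᴴ with hZZ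
  set Δ : Matrix (A × B) (A × B) ℂ := ∑ i, EK i i (blockB ρ i i) with hΔ
  set K : Matrix (A × B) (A × B) ℂ :=
    ∑ i, ∑ j, (if eF i < eF j then EK i i (YY i j) + EK j j (ZZ i j) else 0) with hK
  -- Step A : offdiagonal decomposition of ρ
  have hstepA : ρ - Δ = ∑ i, ∑ j,
      (if eF i < eF j then EK i j (blockB ρ i j) + EK j i (blockB ρ j i) else 0) := by
    have h1 : ρ - Δ = ∑ i, ∑ j,
        (if i = j then (0 : Matrix (A × B) (A × B) ℂ) else EK i j (blockB ρ i j)) := by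
      rw [Finset.sum_congr rfl fun i (_ : i ∈ Finset.univ) =>
        sum_offdiag_eq (fun j => EK i j (blockB ρ i j)) i]
      rw [Finset.sum_sub_distrib, ← matrix_eq_sum_EK ρ, hΔ]
    rw [h1]
    exact offdiag_split (fun i j => eF i < eF j) htri hirr _
  -- Step B : per-pair completion identity
  have hstepB : ∀ i j : A, i ≠ j →
      (EK i j (Ym (blockB ρ i j)) + EK j j (Zm (blockB ρ i j))) *
        (EK i j (Ym (blockB ρ i j)) + EK j j (Zm (blockB ρ i j)))ᴴ
      = EK i i (YY i j) + EK j j (ZZ i j)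
        - (EK i j (blockB ρ i j) + EK j i (blockB ρ j i)) := by
    intro i j hij
    have hZY : Zm (blockB ρ i j) * (Ym (blockB ρ i j))ᴴ = -(blockB ρ j i) := by
      have h1 : (Ym (blockB ρ i j) * (Zm (blockB ρ i j))ᴴ)ᴴ
          = Zm (blockB ρ i j) * (Ym (blockB ρ i j))ᴴ := by
        rw [Matrix.conjTranspose_mul, Matrix.conjTranspose_conjTranspose]
      rw [← h1, Ym_mul_Zm_conjT, Matrix.conjTranspose_neg,
        blockB_conjTranspose hρ.1 i j]
    rw [Matrix.conjTranspose_add, EK_conjTranspose, EK_conjTranspose]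
    rw [Matrix.add_mul, Matrix.mul_add, Matrix.mul_add]
    rw [EK_mul, EK_mul, EK_mul, EK_mul]
    rw [if_pos rfl, if_pos rfl, if_pos rfl, if_pos rfl]
    rw [Ym_mul_Zm_conjT, hZY, EK_neg, EK_neg]
    rw [hYY, hZZ]
    abel
  -- Step C : N - ρ is a sum of PSD matrices
  have hstepC : (Δ + K) - ρ = ∑ i, ∑ j, (if eF i < eF j then
      (EK i j (Ym (blockB ρ i j)) + EK j j (Zm (blockB ρ i j))) *
        (EK i j (Ym (blockB ρ i j)) + EK j j (Zm (blockB ρ i j)))ᴴ else 0) := by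
    have h1 : (Δ + K) - ρ = K - (ρ - Δ) := by abel
    rw [h1, hstepA, hK, ← Finset.sum_sub_distrib]
    refine Finset.sum_congr rfl fun i _ => ?_
    rw [← Finset.sum_sub_distrib]
    refine Finset.sum_congr rfl fun j _ => ?_
    by_cases hc : eF i < eF j
    · rw [if_pos hc, if_pos hc, if_pos hc, hstepB i j (hrne hc)]
    · rw [if_neg hc, if_neg hc, if_neg hc, sub_zero]
  have hpsdC : ((Δ + K) - ρ).PosSemidef := by
    rw [hstepC]
    refine posSemidef_sum _ _ fun i _ => posSemidef_sum _ _ fun j _ => ?_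
    by_cases hc : eF i < eF j
    · rw [if_pos hc]
      exact Matrix.posSemidef_self_mul_conjTranspose _
    · rw [if_neg hc]
      exact Matrix.PosSemidef.zero
  -- Step D : block-diagonal structure
  set Nblk : A → Matrix B B ℂ := fun i => blockB ρ i i
      + ((∑ j, (if eF i < eF j then YY i j else 0))
        + (∑ j, (if eF j < eF i then ZZ j i else 0))) with hNblk
  have hstepD : Δ + K = ∑ i, EK i i (Nblk i) := by
    have hK1 : K = (∑ i, ∑ j, (if eF i < eF j then EK i i (YY i j) else 0))
        + ∑ i, ∑ j, (if eF i < eF j then EK j j (ZZ i j) else 0) := by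
      rw [hK, ← Finset.sum_add_distrib]
      refine Finset.sum_congr rfl fun i _ => ?_
      rw [← Finset.sum_add_distrib]
      refine Finset.sum_congr rfl fun j _ => ?_
      by_cases hc : eF i < eF j <;> simp [hc]
    have hfirst : (∑ i, ∑ j, (if eF i < eF j then EK i i (YY i j) else 0))
        = ∑ i, EK i i (∑ j, (if eF i < eF j then YY i j else 0)) := by
      refine Finset.sum_congr rfl fun i _ => ?_
      rw [EK_sum]
      refine Finset.sum_congr rfl fun j _ => ?_
      by_cases hc : eF i < eF j <;> simp [hc, EK_zero]
    have hsecond : (∑ i, ∑ j, (if eF i < eF j then EK j j (ZZ i j) else 0))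
        = ∑ i, EK i i (∑ j, (if eF j < eF i then ZZ j i else 0)) := by
      rw [Finset.sum_comm]
      refine Finset.sum_congr rfl fun i _ => ?_
      rw [EK_sum]
      refine Finset.sum_congr rfl fun j _ => ?_
      by_cases hc : eF j < eF i <;> simp [hc, EK_zero]
    rw [hK1, hfirst, hsecond, hΔ, ← Finset.sum_add_distrib, ← Finset.sum_add_distrib]
    refine Finset.sum_congr rfl fun i _ => ?_
    rw [← EK_add, ← EK_add]
  -- Step E : blocks are PSD
  have hblkpsd : ∀ i, (Nblk i).PosSemidef := by
    intro i
    refine (blockB_psd hρ i).add (Matrix.PosSemidef.add ?_ ?_)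
    · refine posSemidef_sum _ _ fun j _ => ?_
      by_cases hc : eF i < eF j
      · rw [if_pos hc, hYY]
        exact Matrix.posSemidef_self_mul_conjTranspose _
      · rw [if_neg hc]; exact Matrix.PosSemidef.zero
    · refine posSemidef_sum _ _ fun j _ => ?_
      by_cases hc : eF j < eF i
      · rw [if_pos hc, hZZ]
        exact Matrix.posSemidef_self_mul_conjTranspose _
      · rw [if_neg hc]; exact Matrix.PosSemidef.zero
  -- Step F : total trace
  have htrace : ∑ i, (Nblk i).trace.re = 1 + CIQl1 ρ := by
    have hblktr : ∀ i, (Nblk i).trace.re = (blockB ρ i i).trace.re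
        + ((∑ j, (if eF i < eF j then traceNorm (blockB ρ i j) else 0))
          + ∑ j, (if eF j < eF i then traceNorm (blockB ρ j i) else 0)) := by
      intro i
      rw [hNblk]
      simp only [Matrix.trace_add, Matrix.trace_sum, Complex.add_re, Complex.re_sum]
      congr 2
      · refine Finset.sum_congr rfl fun j _ => ?_
        by_cases hc : eF i < eF j
        · rw [if_pos hc, if_pos hc, hYY]
          rw [Ym_trace]
          simp
        · rw [if_neg hc, if_neg hc, Matrix.trace_zero]
          simp
      · refine Finset.sum_congr rfl fun j _ => ?_
        by_cases hc : eF j < eF i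
        · rw [if_pos hc, if_pos hc, hZZ]
          rw [Zm_trace]
          simp
        · rw [if_neg hc, if_neg hc, Matrix.trace_zero]
          simp
    rw [Finset.sum_congr rfl fun i _ => hblktr i]
    rw [Finset.sum_add_distrib, Finset.sum_add_distrib]
    have htr1 : ∑ i, (blockB ρ i i).trace.re = 1 := by
      have := trace_eq_sum_blockB ρ
      rw [hTr] at this
      have : (1 : ℂ).re = (∑ i, (blockB ρ i i).trace).re := by rw [← this]
      rw [Complex.re_sum] at this
      simpa using this.symm
    have htn2 : ∑ i, ∑ j, (if eF j < eF i then traceNorm (blockB ρ j i) else 0)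
        = ∑ i, ∑ j, (if eF i < eF j then traceNorm (blockB ρ i j) else 0) := by
      rw [Finset.sum_comm]
    have hciq : CIQl1 ρ = ∑ i, ∑ j,
        (if eF i < eF j then traceNorm (blockB ρ i j) + traceNorm (blockB ρ j i) else 0) := by
      unfold CIQl1
      exact offdiag_split (fun i j => eF i < eF j) htri hirr _
    have hconj : ∀ i j : A, traceNorm (blockB ρ j i) = traceNorm (blockB ρ i j) := by
      intro i j
      rw [blockB_conjTranspose hρ.1 i j, traceNorm_conjTranspose]
    rw [htr1, htn2]
    have : CIQl1 ρ = ∑ i, ∑ j, (if eF i < eF j then traceNorm (blockB ρ i j) else 0)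
        + ∑ i, ∑ j, (if eF i < eF j then traceNorm (blockB ρ i j) else 0) := by
      rw [hciq, ← Finset.sum_add_distrib]
      refine Finset.sum_congr rfl fun i _ => ?_
      rw [← Finset.sum_add_distrib]
      refine Finset.sum_congr rfl fun j _ => ?_
      rw [hconj i j]
      by_cases hc : eF i < eF j <;> simp [hc]
    linarith [this]
  -- assemble
  refine ⟨(((1 + CIQl1 ρ)⁻¹ : ℝ) : ℂ) • (∑ i, EK i i (Nblk i)), ?_, ?_⟩
  · exact blockdiag_IQ Nblk hblkpsd hlam htrace
  · have hcanc : ((1 + CIQl1 ρ : ℝ) : ℂ) • ((((1 + CIQl1 ρ)⁻¹ : ℝ) : ℂ)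
        • (∑ i, EK i i (Nblk i))) = ∑ i, EK i i (Nblk i) := by
      rw [smul_smul, ← Complex.ofReal_mul, mul_inv_cancel₀ hlam.ne']
      simp
    rw [hcanc, ← hstepD]
    exact hpsdC

end UpperMain

end CmaxAux

/-- 1 + C^{A|B}_{l1}(ρ)/(d_A − 1) ≤ 2^{C^{A|B}_max(ρ)} ≤ 1 + C^{A|B}_{l1}(ρ). -/
theorem CmaxIQ_vs_CIQl1 {A B : Type*} [Fintype A] [Fintype B] [DecidableEq A] [DecidableEq B]
    (hd : 2 ≤ Fintype.card A)
    (ρ : Matrix (A × B) (A × B) ℂ) (hρ : ρ.PosSemidef) (hTr : ρ.trace = 1) :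
    1 + CIQl1 ρ / ((Fintype.card A : ℝ) - 1) ≤ (2 : ℝ) ^ CmaxIQ ρ ∧
    (2 : ℝ) ^ CmaxIQ ρ ≤ 1 + CIQl1 ρ := by
  classical
  open CmaxAux in
  have hBne : Nonempty B := by
    by_contra h
    rw [not_nonempty_iff] at h
    have hz : ρ.trace = 0 := by
      rw [Matrix.trace, Finset.univ_eq_empty, Finset.sum_empty]
    rw [hz] at hTr
    exact zero_ne_one hTr
  haveI := hBne
  set S : Set ℝ := {l : ℝ | ∃ σ ∈ IQstates A B, ((l : ℂ) • σ - ρ).PosSemidef} with hS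
  obtain ⟨σ₀, hσ₀, hpsd₀⟩ := CmaxAux.upper_bound ρ hρ hTr
  have hmem : (1 + CIQl1 ρ) ∈ S := ⟨σ₀, hσ₀, hpsd₀⟩
  have hlb : ∀ l ∈ S, 1 + CIQl1 ρ / ((Fintype.card A : ℝ) - 1) ≤ l := by
    intro l hl
    obtain ⟨σ, hσ, hp⟩ := hl
    exact CmaxAux.lower_bound hd ρ hTr hσ hp
  have hSne : S.Nonempty := ⟨_, hmem⟩
  have hbdd : BddBelow S := ⟨_, fun l hl => hlb l hl⟩
  have hcard : (0:ℝ) < (Fintype.card A : ℝ) - 1 := by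
    have : (2:ℝ) ≤ (Fintype.card A : ℝ) := by exact_mod_cast hd
    linarith
  have hb0 : (0:ℝ) < 1 + CIQl1 ρ / ((Fintype.card A : ℝ) - 1) := by
    have := div_nonneg (CmaxAux.CIQl1_nonneg ρ) hcard.le
    linarith
  have hInf_ge : 1 + CIQl1 ρ / ((Fintype.card A : ℝ) - 1) ≤ sInf S := le_csInf hSne hlb
  have hInf_le : sInf S ≤ 1 + CIQl1 ρ := csInf_le hbdd hmem
  have hInfpos : 0 < sInf S := lt_of_lt_of_le hb0 hInf_ge
  have hpow : (2 : ℝ) ^ CmaxIQ ρ = sInf S := by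
    unfold CmaxIQ
    rw [← hS]
    exact Real.rpow_logb (by norm_num) (by norm_num) hInfpos
  rw [hpow]
  exact ⟨hInf_ge, hInf_le⟩
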